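/- Let (M1,g1) and (M2,g2) be smooth connected Riemannian manifolds, f_i a positive smooth function on M_i (i=1,2), and c ∈ ℝ. The symmetric (0,2)-tensor field G_{f1f2} is a Riemannian metric on M1×M2 if and only if 0 ≤ c² · (g1(grad f1, grad f1)∘π1) · (g2(grad f2, grad f2)∘π2) < 1 everywhere on M1×M2, where grad f_i denotes the g_i-gradient of f_i. -/

import Mathlib

open scoped Manifold
open Bundle

noncomputable section

/-- A smooth (`C^∞`) vector field on a manifold, i.e. an element of `Γ(TM)`. -/
def SmoothVF {E : Type*} [NormedAddCommGroup E] [NormedSpace ℝ E] {H : Type*}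
    [TopologicalSpace H] (I : ModelWithCorners ℝ E H) {M : Type*} [TopologicalSpace M]
    [ChartedSpace H M] [IsManifold I (⊤ : ℕ∞) M] (X : ∀ x : M, TangentSpace I x) : Prop :=
  ContMDiff I I.tangent (⊤ : ℕ∞) (fun x => (⟨x, X x⟩ : TangentBundle I M))

/-- The differential `df_x(v)` of a function, as a real number. -/
def dfn {E : Type*} [NormedAddCommGroup E] [NormedSpace ℝ E] {H : Type*}
    [TopologicalSpace H] (I : ModelWithCorners ℝ E H) {M : Type*} [TopologicalSpace M]
    [ChartedSpace H M] (f : M → ℝ) (x : M) (v : TangentSpace I x) : ℝ :=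
  mfderiv I 𝓘(ℝ, ℝ) f x v

/-- The action `X(f)` of a vector field `X` on a function `f`. -/
def vfd {E : Type*} [NormedAddCommGroup E] [NormedSpace ℝ E] {H : Type*}
    [TopologicalSpace H] (I : ModelWithCorners ℝ E H) {M : Type*} [TopologicalSpace M]
    [ChartedSpace H M] (X : ∀ x : M, TangentSpace I x) (f : M → ℝ) : M → ℝ :=
  fun x => mfderiv I 𝓘(ℝ, ℝ) f x (X x)

/-- `B` is the Lie bracket `[X, Y]` of the vector fields `X` and `Y`, characterized by its
action `B(f) = X(Y(f)) - Y(X(f))` on smooth functions. -/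
def IsLieBracket {E : Type*} [NormedAddCommGroup E] [NormedSpace ℝ E] {H : Type*}
    [TopologicalSpace H] (I : ModelWithCorners ℝ E H) {M : Type*} [TopologicalSpace M]
    [ChartedSpace H M] (X Y B : ∀ x : M, TangentSpace I x) : Prop :=
  ∀ f : M → ℝ, ContMDiff I 𝓘(ℝ, ℝ) (⊤ : ℕ∞) f →
    vfd I B f = fun x => vfd I X (vfd I Y f) x - vfd I Y (vfd I X f) x

/-- An affine (Koszul) connection on vector fields. -/
structure IsAffineConnection {E : Type*} [NormedAddCommGroup E] [NormedSpace ℝ E] {H : Type*}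
    [TopologicalSpace H] (I : ModelWithCorners ℝ E H) {M : Type*} [TopologicalSpace M]
    [ChartedSpace H M]
    (D : (∀ x : M, TangentSpace I x) → (∀ x : M, TangentSpace I x) → ∀ x : M, TangentSpace I x) :
    Prop where
  add_left : ∀ X Y Z, D (fun x => X x + Y x) Z = fun x => D X Z x + D Y Z x
  smul_left : ∀ (f : M → ℝ), ContMDiff I 𝓘(ℝ, ℝ) (⊤ : ℕ∞) f → ∀ X Y,
    D (fun x => f x • X x) Y = fun x => f x • D X Y x
  add_right : ∀ X Y Z, D X (fun x => Y x + Z x) = fun x => D X Y x + D X Z x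
  smul_const_right : ∀ (a : ℝ) (X Y), D X (fun x => a • Y x) = fun x => a • D X Y x
  leibniz : ∀ (f : M → ℝ), ContMDiff I 𝓘(ℝ, ℝ) (⊤ : ℕ∞) f → ∀ X Y,
    D X (fun x => f x • Y x) = fun x => f x • D X Y x + vfd I X f x • Y x

/-- A Riemannian metric: a pointwise bilinear, symmetric, positive definite (0,2)-tensor. -/
def IsRiemannianMetric {E : Type*} [NormedAddCommGroup E] [NormedSpace ℝ E] {H : Type*}
    [TopologicalSpace H] (I : ModelWithCorners ℝ E H) {M : Type*} [TopologicalSpace M]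
    [ChartedSpace H M] (g : ∀ x : M, TangentSpace I x → TangentSpace I x → ℝ) : Prop :=
  (∀ (x : M) (v : TangentSpace I x), IsLinearMap ℝ (g x v)) ∧
  (∀ (x : M) (v w : TangentSpace I x), g x v w = g x w v) ∧
  (∀ (x : M) (v : TangentSpace I x), v ≠ 0 → 0 < g x v v)

/-- The connections `D` and `D'` are conjugate (dual) with respect to `g`:
`X(g(Y,Z)) = g(D_X Y, Z) + g(Y, D'_X Z)` for all smooth vector fields `X, Y, Z`. -/
def Conjugate {E : Type*} [NormedAddCommGroup E] [NormedSpace ℝ E] {H : Type*}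
    [TopologicalSpace H] (I : ModelWithCorners ℝ E H) {M : Type*} [TopologicalSpace M]
    [ChartedSpace H M] [IsManifold I (⊤ : ℕ∞) M]
    (g : ∀ x : M, TangentSpace I x → TangentSpace I x → ℝ)
    (D D' : (∀ x : M, TangentSpace I x) → (∀ x : M, TangentSpace I x) → ∀ x : M, TangentSpace I x) :
    Prop :=
  ∀ X Y Z, SmoothVF I X → SmoothVF I Y → SmoothVF I Z →
    vfd I X (fun x => g x (Y x) (Z x)) = fun x => g x (D X Y x) (Z x) + g x (Y x) (D' X Z x)

/-- A dualistic structure `(g, D, D')`: a pair of affine connections conjugate w.r.t. `g`. -/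
def DualisticStructure {E : Type*} [NormedAddCommGroup E] [NormedSpace ℝ E] {H : Type*}
    [TopologicalSpace H] (I : ModelWithCorners ℝ E H) {M : Type*} [TopologicalSpace M]
    [ChartedSpace H M] [IsManifold I (⊤ : ℕ∞) M]
    (g : ∀ x : M, TangentSpace I x → TangentSpace I x → ℝ)
    (D D' : (∀ x : M, TangentSpace I x) → (∀ x : M, TangentSpace I x) → ∀ x : M, TangentSpace I x) :
    Prop :=
  IsAffineConnection I D ∧ IsAffineConnection I D' ∧ Conjugate I g D D'

/-- Torsion-freeness of a connection: `D_X Y - D_Y X = [X, Y]`. -/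
def IsTorsionFree {E : Type*} [NormedAddCommGroup E] [NormedSpace ℝ E] {H : Type*}
    [TopologicalSpace H] (I : ModelWithCorners ℝ E H) {M : Type*} [TopologicalSpace M]
    [ChartedSpace H M] [IsManifold I (⊤ : ℕ∞) M]
    (D : (∀ x : M, TangentSpace I x) → (∀ x : M, TangentSpace I x) → ∀ x : M, TangentSpace I x) :
    Prop :=
  ∀ X Y, SmoothVF I X → SmoothVF I Y → IsLieBracket I X Y (fun x => D X Y x - D Y X x)

/-- The covariant derivative `(∇g)(X, Y, Z) = X(g(Y,Z)) - g(∇_X Y, Z) - g(Y, ∇_X Z)`. -/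
def nablaG {E : Type*} [NormedAddCommGroup E] [NormedSpace ℝ E] {H : Type*}
    [TopologicalSpace H] (I : ModelWithCorners ℝ E H) {M : Type*} [TopologicalSpace M]
    [ChartedSpace H M] (g : ∀ x : M, TangentSpace I x → TangentSpace I x → ℝ)
    (D : (∀ x : M, TangentSpace I x) → (∀ x : M, TangentSpace I x) → ∀ x : M, TangentSpace I x)
    (X Y Z : ∀ x : M, TangentSpace I x) : M → ℝ :=
  fun x => vfd I X (fun y => g y (Y y) (Z y)) x - g x (D X Y x) (Z x) - g x (Y x) (D X Z x)

/-- `(M, ∇, g)` is a statistical manifold: `∇` is torsion-free and `∇g` is symmetric. -/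
def IsStatistical {E : Type*} [NormedAddCommGroup E] [NormedSpace ℝ E] {H : Type*}
    [TopologicalSpace H] (I : ModelWithCorners ℝ E H) {M : Type*} [TopologicalSpace M]
    [ChartedSpace H M] [IsManifold I (⊤ : ℕ∞) M]
    (g : ∀ x : M, TangentSpace I x → TangentSpace I x → ℝ)
    (D : (∀ x : M, TangentSpace I x) → (∀ x : M, TangentSpace I x) → ∀ x : M, TangentSpace I x) :
    Prop :=
  IsTorsionFree I D ∧
  ∀ X Y Z, SmoothVF I X → SmoothVF I Y → SmoothVF I Z →
    nablaG I g D X Y Z = nablaG I g D Y X Z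

/-- `G` is the gradient of `f` with respect to the metric `g`: `g(G, ·) = df`. -/
def IsGradient {E : Type*} [NormedAddCommGroup E] [NormedSpace ℝ E] {H : Type*}
    [TopologicalSpace H] (I : ModelWithCorners ℝ E H) {M : Type*} [TopologicalSpace M]
    [ChartedSpace H M] (g : ∀ x : M, TangentSpace I x → TangentSpace I x → ℝ)
    (f : M → ℝ) (G : ∀ x : M, TangentSpace I x) : Prop :=
  ∀ (x : M) (v : TangentSpace I x), g x (G x) v = dfn I f x v

/-- The curvature `R(X,Y)Z = D_X D_Y Z - D_Y D_X Z - D_B Z`, where `B = [X, Y]`. -/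
def curvWith {E : Type*} [NormedAddCommGroup E] [NormedSpace ℝ E] {H : Type*}
    [TopologicalSpace H] (I : ModelWithCorners ℝ E H) {M : Type*} [TopologicalSpace M]
    [ChartedSpace H M]
    (D : (∀ x : M, TangentSpace I x) → (∀ x : M, TangentSpace I x) → ∀ x : M, TangentSpace I x)
    (X Y Z B : ∀ x : M, TangentSpace I x) : ∀ x : M, TangentSpace I x :=
  fun x => D X (D Y Z) x - D Y (D X Z) x - D B Z x

/-- The tensor `B_f(X,Y) = c f (X(Y(f)) - (D_X Y)(f)) + c X(f) Y(f) - g(X,Y)`. -/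
def Btensor {E : Type*} [NormedAddCommGroup E] [NormedSpace ℝ E] {H : Type*}
    [TopologicalSpace H] (I : ModelWithCorners ℝ E H) {M : Type*} [TopologicalSpace M]
    [ChartedSpace H M] (g : ∀ x : M, TangentSpace I x → TangentSpace I x → ℝ)
    (c : ℝ) (f : M → ℝ)
    (D : (∀ x : M, TangentSpace I x) → (∀ x : M, TangentSpace I x) → ∀ x : M, TangentSpace I x)
    (X Y : ∀ x : M, TangentSpace I x) : M → ℝ :=
  fun x => c * f x * (vfd I X (vfd I Y f) x - vfd I (D X Y) f x)
    + c * vfd I X f x * vfd I Y f x - g x (X x) (Y x)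

/-- The Hessian of `f` with respect to the connection `D`:
`H^f(X,Y) = X(Y(f)) - (D_X Y)(f)`. -/
def Hess {E : Type*} [NormedAddCommGroup E] [NormedSpace ℝ E] {H : Type*}
    [TopologicalSpace H] (I : ModelWithCorners ℝ E H) {M : Type*} [TopologicalSpace M]
    [ChartedSpace H M] (f : M → ℝ)
    (D : (∀ x : M, TangentSpace I x) → (∀ x : M, TangentSpace I x) → ∀ x : M, TangentSpace I x)
    (X Y : ∀ x : M, TangentSpace I x) : M → ℝ :=
  fun x => vfd I X (vfd I Y f) x - vfd I (D X Y) f x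

variable {E₁ : Type*} [NormedAddCommGroup E₁] [NormedSpace ℝ E₁]
  {H₁ : Type*} [TopologicalSpace H₁] {I₁ : ModelWithCorners ℝ E₁ H₁}
  {M₁ : Type*} [TopologicalSpace M₁] [ChartedSpace H₁ M₁] [IsManifold I₁ (⊤ : ℕ∞) M₁]
  {E₂ : Type*} [NormedAddCommGroup E₂] [NormedSpace ℝ E₂]
  {H₂ : Type*} [TopologicalSpace H₂] {I₂ : ModelWithCorners ℝ E₂ H₂}
  {M₂ : Type*} [TopologicalSpace M₂] [ChartedSpace H₂ M₂] [IsManifold I₂ (⊤ : ℕ∞) M₂]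

/-- The horizontal lift of a vector field on `M₁` to `M₁ × M₂`: the unique vector field
projecting to `X₁ ∘ π₁` under `dπ₁` and to `0` under `dπ₂`. -/
def hLift (X₁ : ∀ x : M₁, TangentSpace I₁ x) :
    ∀ p : M₁ × M₂, TangentSpace (I₁.prod I₂) p :=
  fun p => (X₁ p.1, (0 : TangentSpace I₂ p.2))

/-- The vertical lift of a vector field on `M₂` to `M₁ × M₂`. -/
def vLift (X₂ : ∀ y : M₂, TangentSpace I₂ y) :
    ∀ p : M₁ × M₂, TangentSpace (I₁.prod I₂) p :=
  fun p => ((0 : TangentSpace I₁ p.1), X₂ p.2)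

/-- The generalized warped product tensor
`G_{f₁f₂} = (f₂ᵛ)² π₁*g₁ + (f₁ʰ)² π₂*g₂ + c f₁ʰ f₂ᵛ (df₁ʰ ⊗ df₂ᵛ + df₂ᵛ ⊗ df₁ʰ)`. -/
def Gmetric (I₁ : ModelWithCorners ℝ E₁ H₁) (I₂ : ModelWithCorners ℝ E₂ H₂)
    (g₁ : ∀ x : M₁, TangentSpace I₁ x → TangentSpace I₁ x → ℝ)
    (g₂ : ∀ y : M₂, TangentSpace I₂ y → TangentSpace I₂ y → ℝ)
    (c : ℝ) (f₁ : M₁ → ℝ) (f₂ : M₂ → ℝ) :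
    ∀ p : M₁ × M₂, TangentSpace (I₁.prod I₂) p → TangentSpace (I₁.prod I₂) p → ℝ :=
  fun p v w =>
    (f₂ p.2) ^ 2 * g₁ p.1 v.1 w.1 + (f₁ p.1) ^ 2 * g₂ p.2 v.2 w.2 +
      c * f₁ p.1 * f₂ p.2 *
        (dfn I₁ f₁ p.1 v.1 * dfn I₂ f₂ p.2 w.2 + dfn I₂ f₂ p.2 v.2 * dfn I₁ f₁ p.1 w.1)

/-- The tensor `g̃_{f₁f₂} = π₁*g₁ + (f₁ʰ)² π₂*g₂ + c² (f₂ᵛ)² df₁ʰ ⊗ df₁ʰ`. -/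
def Gtilde (I₁ : ModelWithCorners ℝ E₁ H₁) (I₂ : ModelWithCorners ℝ E₂ H₂)
    (g₁ : ∀ x : M₁, TangentSpace I₁ x → TangentSpace I₁ x → ℝ)
    (g₂ : ∀ y : M₂, TangentSpace I₂ y → TangentSpace I₂ y → ℝ)
    (c : ℝ) (f₁ : M₁ → ℝ) (f₂ : M₂ → ℝ) :
    ∀ p : M₁ × M₂, TangentSpace (I₁.prod I₂) p → TangentSpace (I₁.prod I₂) p → ℝ :=
  fun p v w =>
    g₁ p.1 v.1 w.1 + (f₁ p.1) ^ 2 * g₂ p.2 v.2 w.2 +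
      c ^ 2 * (f₂ p.2) ^ 2 *
        dfn I₁ f₁ p.1 v.1 * dfn I₁ f₁ p.1 w.1


section myHelpers

variable {E : Type*} [NormedAddCommGroup E] [NormedSpace ℝ E] {H : Type*}
  [TopologicalSpace H] {I : ModelWithCorners ℝ E H} {M : Type*} [TopologicalSpace M]
  [ChartedSpace H M]

lemma my_dfn_add (f : M → ℝ) (x : M) (v w : TangentSpace I x) :
    dfn I f x (v + w) = dfn I f x v + dfn I f x w :=
  (mfderiv I 𝓘(ℝ, ℝ) f x).map_add v w

lemma my_dfn_smul (f : M → ℝ) (x : M) (a : ℝ) (v : TangentSpace I x) :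
    dfn I f x (a • v) = a * dfn I f x v := by
  have := (mfderiv I 𝓘(ℝ, ℝ) f x).map_smul a v
  exact this

lemma my_g_self_nonneg (g : ∀ x : M, TangentSpace I x → TangentSpace I x → ℝ)
    (hg : IsRiemannianMetric I g) (x : M) (v : TangentSpace I x) : 0 ≤ g x v v := by
  by_cases h : v = 0
  · subst h
    rw [(hg.1 x 0).map_zero]
  · exact le_of_lt (hg.2.2 x v h)

lemma my_g_smul_smul (g : ∀ x : M, TangentSpace I x → TangentSpace I x → ℝ)
    (hg : IsRiemannianMetric I g) (x : M) (a b : ℝ) (u w : TangentSpace I x) :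
    g x (a • u) (b • w) = a * b * g x u w := by
  have h1 : g x (a • u) (b • w) = b * g x (a • u) w := by
    have := (hg.1 x (a • u)).map_smul b w
    simpa [smul_eq_mul] using this
  have h2 : g x (a • u) w = a * g x w u := by
    rw [hg.2.1 x (a • u) w]
    have := (hg.1 x w).map_smul a u
    simpa [smul_eq_mul] using this
  rw [h1, h2, hg.2.1 x w u]; ring

lemma my_g_expand (g : ∀ x : M, TangentSpace I x → TangentSpace I x → ℝ)
    (hg : IsRiemannianMetric I g) (x : M) (s t : ℝ) (u v : TangentSpace I x) :
    g x (s • u + t • v) (s • u + t • v) =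
      s ^ 2 * g x u u + 2 * s * t * g x u v + t ^ 2 * g x v v := by
  have h2 : ∀ w : TangentSpace I x, g x w (s • u + t • v) = s * g x w u + t * g x w v := by
    intro w
    rw [(hg.1 x w).map_add, (hg.1 x w).map_smul, (hg.1 x w).map_smul, smul_eq_mul, smul_eq_mul]
  rw [h2, hg.2.1 x (s • u + t • v) u, hg.2.1 x (s • u + t • v) v, h2, h2,
    hg.2.1 x u v, hg.2.1 x v u]
  ring

lemma my_g_cs (g : ∀ x : M, TangentSpace I x → TangentSpace I x → ℝ)
    (hg : IsRiemannianMetric I g) (x : M) (u v : TangentSpace I x) :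
    (g x u v) ^ 2 ≤ g x u u * g x v v := by
  by_cases hv : v = 0
  · subst hv
    rw [(hg.1 x u).map_zero]
    have h0 : g x (0 : TangentSpace I x) (0 : TangentSpace I x) = 0 := (hg.1 x 0).map_zero
    rw [h0]
    simp
  · have hB : 0 < g x v v := hg.2.2 x v hv
    have key : 0 ≤ g x ((g x v v) • u + (-(g x u v)) • v) ((g x v v) • u + (-(g x u v)) • v) :=
      my_g_self_nonneg g hg x _
    rw [my_g_expand g hg x (g x v v) (-(g x u v)) u v] at key
    nlinarith [key, hB]

end myHelpers

lemma my_scalar_key (A B G₁ G₂ a b c f h : ℝ) (hA : 0 ≤ A) (hB : 0 ≤ B)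
    (hG₁ : 0 ≤ G₁) (hG₂ : 0 ≤ G₂) (ha : a ^ 2 ≤ G₁ * A) (hb : b ^ 2 ≤ G₂ * B)
    (hc : c ^ 2 * G₁ * G₂ < 1) (hf : 0 < f) (hh : 0 < h) (hAB : 0 < A ∨ 0 < B) :
    0 < h ^ 2 * A + f ^ 2 * B + 2 * c * f * h * (a * b) := by
  have hR : 0 < h ^ 2 * A + f ^ 2 * B := by
    rcases hAB with h' | h'
    · nlinarith [mul_pos (pow_pos hh 2) h', mul_nonneg (le_of_lt (pow_pos hf 2)) hB]
    · nlinarith [mul_pos (pow_pos hf 2) h', mul_nonneg (le_of_lt (pow_pos hh 2)) hA]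
  by_cases h0 : 0 ≤ c * (a * b)
  · have : 0 ≤ 2 * c * f * h * (a * b) := by
      have := mul_nonneg (mul_nonneg (by norm_num : (0:ℝ) ≤ 2)
        (mul_nonneg (le_of_lt hf) (le_of_lt hh))) h0
      nlinarith [this]
    linarith
  · push_neg at h0
    have hane : a ≠ 0 := by
      intro h'; rw [h'] at h0; simp at h0
    have hbne : b ≠ 0 := by
      intro h'; rw [h'] at h0; simp at h0
    have ha2 : 0 < a ^ 2 := by positivity
    have hb2 : 0 < b ^ 2 := by positivity
    have hApos : 0 < A := by nlinarith
    have hBpos : 0 < B := by nlinarith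
    set L : ℝ := -(2 * c * f * h * (a * b)) with hLdef
    set R : ℝ := h ^ 2 * A + f ^ 2 * B with hRdef
    have hL : 0 < L := by
      have := mul_pos (mul_pos hf hh) (neg_pos.mpr h0)
      simp only [hLdef]; nlinarith [this]
    have hab2 : a ^ 2 * b ^ 2 ≤ G₁ * A * (G₂ * B) :=
      mul_le_mul ha hb (le_of_lt hb2) (by positivity)
    have step1 : c ^ 2 * (a ^ 2 * b ^ 2) ≤ c ^ 2 * (G₁ * A * (G₂ * B)) :=
      mul_le_mul_of_nonneg_left hab2 (sq_nonneg c)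
    have step2 : (c ^ 2 * G₁ * G₂) * (A * B) < 1 * (A * B) :=
      mul_lt_mul_of_pos_right hc (mul_pos hApos hBpos)
    have h4 : (0:ℝ) < 4 * (f ^ 2 * h ^ 2) :=
      mul_pos (by norm_num) (mul_pos (pow_pos hf 2) (pow_pos hh 2))
    have hsq : L ^ 2 < R ^ 2 := by
      calc L ^ 2 = 4 * (f ^ 2 * h ^ 2) * (c ^ 2 * (a ^ 2 * b ^ 2)) := by
              simp only [hLdef]; ring
        _ ≤ 4 * (f ^ 2 * h ^ 2) * (c ^ 2 * (G₁ * A * (G₂ * B))) :=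
              mul_le_mul_of_nonneg_left step1 (le_of_lt h4)
        _ = 4 * (f ^ 2 * h ^ 2) * ((c ^ 2 * G₁ * G₂) * (A * B)) := by ring
        _ < 4 * (f ^ 2 * h ^ 2) * (1 * (A * B)) := mul_lt_mul_of_pos_left step2 h4
        _ ≤ R ^ 2 := by simp only [hRdef]; nlinarith [sq_nonneg (h ^ 2 * A - f ^ 2 * B)]
    have hLR : L < R := lt_of_pow_lt_pow_left₀ 2 (le_of_lt hR) hsq
    simp only [hLdef, hRdef] at hLR ⊢
    linarith


/-- Proposition 2.4: `G_{f₁f₂}` is a Riemannian metric iff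
`0 ≤ c² g₁(grad f₁, grad f₁)ʰ g₂(grad f₂, grad f₂)ᵛ < 1` everywhere. -/
theorem statement3 [ConnectedSpace M₁] [ConnectedSpace M₂]
    (g₁ : ∀ x : M₁, TangentSpace I₁ x → TangentSpace I₁ x → ℝ)
    (hg₁ : IsRiemannianMetric I₁ g₁)
    (g₂ : ∀ y : M₂, TangentSpace I₂ y → TangentSpace I₂ y → ℝ)
    (hg₂ : IsRiemannianMetric I₂ g₂)
    (f₁ : M₁ → ℝ) (hf₁ : ContMDiff I₁ 𝓘(ℝ, ℝ) (⊤ : ℕ∞) f₁) (hf₁pos : ∀ x : M₁, 0 < f₁ x)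
    (f₂ : M₂ → ℝ) (hf₂ : ContMDiff I₂ 𝓘(ℝ, ℝ) (⊤ : ℕ∞) f₂) (hf₂pos : ∀ y : M₂, 0 < f₂ y)
    (c : ℝ)
    (grad₁ : ∀ x : M₁, TangentSpace I₁ x) (hgrad₁ : IsGradient I₁ g₁ f₁ grad₁)
    (grad₂ : ∀ y : M₂, TangentSpace I₂ y) (hgrad₂ : IsGradient I₂ g₂ f₂ grad₂)
 :
    IsRiemannianMetric (I₁.prod I₂) (Gmetric I₁ I₂ g₁ g₂ c f₁ f₂) ↔
      ∀ p : M₁ × M₂,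
        0 ≤ c ^ 2 * g₁ p.1 (grad₁ p.1) (grad₁ p.1) * g₂ p.2 (grad₂ p.2) (grad₂ p.2) ∧
        c ^ 2 * g₁ p.1 (grad₁ p.1) (grad₁ p.1) * g₂ p.2 (grad₂ p.2) (grad₂ p.2) < 1 := by
  constructor
  · intro hG p
    refine ⟨mul_nonneg (mul_nonneg (sq_nonneg c) (my_g_self_nonneg g₁ hg₁ p.1 _))
      (my_g_self_nonneg g₂ hg₂ p.2 _), ?_⟩
    by_cases h1 : grad₁ p.1 = 0
    · rw [h1, (hg₁.1 p.1 0).map_zero]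
      simp
    by_cases h2 : grad₂ p.2 = 0
    · rw [h2, (hg₂.1 p.2 0).map_zero]
      simp
    have hQ1 : 0 < g₁ p.1 (grad₁ p.1) (grad₁ p.1) := hg₁.2.2 p.1 _ h1
    have hQ2 : 0 < g₂ p.2 (grad₂ p.2) (grad₂ p.2) := hg₂.2.2 p.2 _ h2
    set Q1 := g₁ p.1 (grad₁ p.1) (grad₁ p.1) with hQ1def
    set Q2 := g₂ p.2 (grad₂ p.2) (grad₂ p.2) with hQ2def
    set x : ℝ := -(c * f₁ p.1 * Q2) with hxdef
    have hv : ((x • grad₁ p.1, (f₂ p.2) • grad₂ p.2) : TangentSpace (I₁.prod I₂) p) ≠ 0 := by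
      intro hzero
      apply h2
      have h2' : ((f₂ p.2) • grad₂ p.2 : TangentSpace I₂ p.2) = 0 :=
        congrArg Prod.snd hzero
      exact (smul_eq_zero.mp h2').resolve_left (ne_of_gt (hf₂pos p.2))
    have hpos := hG.2.2 p ((x • grad₁ p.1, (f₂ p.2) • grad₂ p.2) :
      TangentSpace (I₁.prod I₂) p) hv
    simp only [Gmetric] at hpos
    have hd1 : dfn I₁ f₁ p.1 (grad₁ p.1) = Q1 := (hgrad₁ p.1 (grad₁ p.1)).symm
    have hd2 : dfn I₂ f₂ p.2 (grad₂ p.2) = Q2 := (hgrad₂ p.2 (grad₂ p.2)).symm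
    rw [my_dfn_smul, my_dfn_smul, hd1, hd2, my_g_smul_smul g₁ hg₁,
      my_g_smul_smul g₂ hg₂] at hpos
    rw [← hQ1def, ← hQ2def, hxdef] at hpos
    have hfh : 0 < (f₁ p.1) ^ 2 * (f₂ p.2) ^ 2 * Q2 :=
      mul_pos (mul_pos (pow_pos (hf₁pos p.1) 2) (pow_pos (hf₂pos p.2) 2)) hQ2
    nlinarith [hpos, hfh, hQ1, hQ2]
  · intro h
    refine ⟨?_, ?_, ?_⟩
    · intro p v
      constructor
      · intro w w'
        have e1 : dfn I₁ f₁ p.1 ((w + w').1) = dfn I₁ f₁ p.1 w.1 + dfn I₁ f₁ p.1 w'.1 :=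
          my_dfn_add f₁ p.1 w.1 w'.1
        have e2 : dfn I₂ f₂ p.2 ((w + w').2) = dfn I₂ f₂ p.2 w.2 + dfn I₂ f₂ p.2 w'.2 :=
          my_dfn_add f₂ p.2 w.2 w'.2
        have eg1 : g₁ p.1 v.1 ((w + w').1) = g₁ p.1 v.1 w.1 + g₁ p.1 v.1 w'.1 :=
          (hg₁.1 p.1 v.1).map_add w.1 w'.1
        have eg2 : g₂ p.2 v.2 ((w + w').2) = g₂ p.2 v.2 w.2 + g₂ p.2 v.2 w'.2 :=
          (hg₂.1 p.2 v.2).map_add w.2 w'.2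
        simp only [Gmetric, e1, e2, eg1, eg2]
        ring
      · intro a w
        have e1 : dfn I₁ f₁ p.1 ((a • w).1) = a * dfn I₁ f₁ p.1 w.1 :=
          my_dfn_smul f₁ p.1 a w.1
        have e2 : dfn I₂ f₂ p.2 ((a • w).2) = a * dfn I₂ f₂ p.2 w.2 :=
          my_dfn_smul f₂ p.2 a w.2
        have eg1 : g₁ p.1 v.1 ((a • w).1) = a * g₁ p.1 v.1 w.1 := by
          exact (hg₁.1 p.1 v.1).map_smul a w.1
        have eg2 : g₂ p.2 v.2 ((a • w).2) = a * g₂ p.2 v.2 w.2 := by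
          exact (hg₂.1 p.2 v.2).map_smul a w.2
        simp only [Gmetric, e1, e2, eg1, eg2, smul_eq_mul]
        ring
    · intro p v w
      simp only [Gmetric, hg₁.2.1 p.1 v.1 w.1, hg₂.2.1 p.2 v.2 w.2]
      ring
    · intro p v hv
      have hAB : 0 < g₁ p.1 v.1 v.1 ∨ 0 < g₂ p.2 v.2 v.2 := by
        by_cases h1 : v.1 = 0
        · right
          apply hg₂.2.2 p.2 v.2
          intro h2
          exact hv (Prod.ext h1 h2)
        · exact Or.inl (hg₁.2.2 p.1 v.1 h1)
      have ha : (dfn I₁ f₁ p.1 v.1) ^ 2 ≤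
          g₁ p.1 (grad₁ p.1) (grad₁ p.1) * g₁ p.1 v.1 v.1 := by
        rw [← hgrad₁ p.1 v.1]
        exact my_g_cs g₁ hg₁ p.1 (grad₁ p.1) v.1
      have hb : (dfn I₂ f₂ p.2 v.2) ^ 2 ≤
          g₂ p.2 (grad₂ p.2) (grad₂ p.2) * g₂ p.2 v.2 v.2 := by
        rw [← hgrad₂ p.2 v.2]
        exact my_g_cs g₂ hg₂ p.2 (grad₂ p.2) v.2
      have key := my_scalar_key (g₁ p.1 v.1 v.1) (g₂ p.2 v.2 v.2)
        (g₁ p.1 (grad₁ p.1) (grad₁ p.1)) (g₂ p.2 (grad₂ p.2) (grad₂ p.2))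
        (dfn I₁ f₁ p.1 v.1) (dfn I₂ f₂ p.2 v.2) c (f₁ p.1) (f₂ p.2)
        (my_g_self_nonneg g₁ hg₁ p.1 v.1) (my_g_self_nonneg g₂ hg₂ p.2 v.2)
        (my_g_self_nonneg g₁ hg₁ p.1 _) (my_g_self_nonneg g₂ hg₂ p.2 _)
        ha hb (h p).2 (hf₁pos p.1) (hf₂pos p.2) hAB
      simp only [Gmetric]
      nlinarith [key]
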